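/- Let E be a bounded convex body in ℝ^n containing the closed ball of radius ρ centered at the origin and contained in the ball of radius 6ρ. Then the radial projection map from E \ B(0, ρ) to ∂E, sending x to the unique point of ∂E on the ray from the origin through x, is Lipschitz with Lipschitz constant at most 36. -/

import Mathlib

open Metric

set_option maxHeartbeats 1600000 in
/-- Key geometric estimate: if `p, q` are boundary points of a convex body
`closedBall 0 ρ ⊆ E ⊆ ball 0 (6ρ)` and `0 < b ≤ a` with `ρ ≤ ‖b • q‖`, then
`‖p - q‖ ≤ 36 * ‖a • p - b • q‖`. -/
lemma radial_key {F : Type*} [NormedAddCommGroup F] [InnerProductSpace ℝ F]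
    {E : Set F} (hconv : Convex ℝ E) {ρ : ℝ} (hρ : 0 < ρ)
    (hin : Metric.closedBall (0 : F) ρ ⊆ E) (hout : E ⊆ Metric.ball (0 : F) (6 * ρ))
    {p q : F} (hp : p ∈ frontier E) (hq : q ∈ frontier E)
    {a b : ℝ} (hb0 : 0 < b) (hba : b ≤ a)
    (hyρ : ρ ≤ ‖b • q‖) :
    ‖p - q‖ ≤ 36 * ‖a • p - b • q‖ := by
  by_cases hpq : p = q
  · simp only [hpq, sub_self, norm_zero]
    positivity
  have hEc : closure E ⊆ Metric.closedBall (0 : F) (6 * ρ) :=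
    closure_minimal (hout.trans Metric.ball_subset_closedBall) Metric.isClosed_closedBall
  have hq6 : ‖q‖ ≤ 6 * ρ := mem_closedBall_zero_iff.1 (hEc (frontier_subset_closure hq))
  have hp6 : ‖p‖ ≤ 6 * ρ := mem_closedBall_zero_iff.1 (hEc (frontier_subset_closure hp))
  have hbq : ‖b • q‖ = b * ‖q‖ := by
    rw [norm_smul, Real.norm_eq_abs, abs_of_pos hb0]
  have hb6 : 1 / 6 ≤ b := by
    rw [hbq] at hyρ; nlinarith
  obtain ⟨D, hDdef⟩ : ∃ D : ℝ, D = ‖p - q‖ := ⟨_, rfl⟩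
  rw [← hDdef]
  have hD : 0 < D := by
    rw [hDdef]; exact norm_sub_pos_iff.mpr hpq
  have hD0 : D ≠ 0 := ne_of_gt hD
  obtain ⟨c, hcdef⟩ : ∃ c : ℝ, c = (inner ℝ p (q - p) : ℝ) := ⟨_, rfl⟩
  obtain ⟨z, hzdef⟩ : ∃ z : F, z = p - (c / D ^ 2) • (q - p) := ⟨_, rfl⟩
  have hqp : ‖q - p‖ = D := by rw [hDdef, norm_sub_rev]
  have hzo : (inner ℝ z (q - p) : ℝ) = 0 := by
    rw [hzdef, inner_sub_left, real_inner_smul_left, real_inner_self_eq_norm_sq, hqp, ← hcdef]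
    field_simp
    ring
  obtain ⟨m, hmdef⟩ : ∃ m : ℝ, m = ‖z‖ := ⟨_, rfl⟩
  obtain ⟨W, hWdef⟩ : ∃ W : ℝ, W = ‖a • p - b • q‖ := ⟨_, rfl⟩
  rw [← hWdef]
  have hw : a • p - b • q = (b - (a - b) * c / D ^ 2) • (p - q) + (a - b) • z := by
    rw [hzdef]; module
  have hiz : (inner ℝ (p - q) z : ℝ) = 0 := by
    rw [← neg_sub q p, inner_neg_left, real_inner_comm, hzo, neg_zero]
  have hwn : W ^ 2 = (b - (a - b) * c / D ^ 2) ^ 2 * D ^ 2 + (a - b) ^ 2 * m ^ 2 := by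
    rw [hWdef, hw, norm_add_sq_real, real_inner_smul_left, real_inner_smul_right, hiz,
      norm_smul, norm_smul, Real.norm_eq_abs, Real.norm_eq_abs, ← hDdef, ← hmdef]
    rw [mul_pow, mul_pow, sq_abs, sq_abs]
    ring
  have hWsq : (b * D) ^ 2 / 36 ≤ W ^ 2 := by
    rcases le_or_gt c 0 with hc | hc
    · -- radial-ish case: coefficient only grows
      have hsc : (a - b) * c ≤ 0 := mul_nonpos_iff.2 (Or.inl ⟨by linarith, hc⟩)
      have h1 : (a - b) * c / D ^ 2 ≤ 0 :=
        div_nonpos_of_nonpos_of_nonneg hsc (by positivity)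
      have hβ : b ≤ b - (a - b) * c / D ^ 2 := by linarith
      have hββ : b ^ 2 * D ^ 2 ≤ (b - (a - b) * c / D ^ 2) ^ 2 * D ^ 2 := by
        have : b ^ 2 ≤ (b - (a - b) * c / D ^ 2) ^ 2 := by nlinarith
        exact mul_le_mul_of_nonneg_right this (sq_nonneg D)
      nlinarith [sq_nonneg ((a - b) * m), sq_nonneg (b * D)]
    · -- tangential case: need distance of the chord line from the origin
      have hDc0 : (0:ℝ) < D ^ 2 + c := by positivity
      have hm : ρ ≤ m := by
        by_contra hm'
        push_neg at hm'
        have hzint : z ∈ interior E :=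
          interior_maximal (Metric.ball_subset_closedBall.trans hin) Metric.isOpen_ball
            (mem_ball_zero_iff.2 (by rw [← hmdef]; exact hm'))
        have hqc : q ∈ closure E := frontier_subset_closure hq
        have hDc : D ^ 2 + c ≠ 0 := ne_of_gt hDc0
        have hcombo : (D ^ 2 / (D ^ 2 + c)) • z + (c / (D ^ 2 + c)) • q = p := by
          rw [hzdef]
          match_scalars <;> field_simp <;> ring
        have hpint : p ∈ interior E := by
          rw [← hcombo]
          exact hconv.combo_interior_closure_mem_interior hzint hqc
            (div_pos (by positivity) hDc0) (le_of_lt (div_pos hc hDc0)) (by field_simp)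
        exact hp.2 hpint
      have hpz : p = z + (c / D ^ 2) • (q - p) := by rw [hzdef]; module
      have hcD : (0:ℝ) < c / D ^ 2 := div_pos hc (by positivity)
      have hnrm : ‖(c / D ^ 2) • (q - p)‖ = c / D := by
        rw [norm_smul, Real.norm_eq_abs, abs_of_pos hcD, hqp]
        field_simp
      have h0 : (inner ℝ z ((c / D ^ 2) • (q - p)) : ℝ) = 0 := by
        rw [real_inner_smul_right, hzo, mul_zero]
      have hpn : ‖p‖ ^ 2 = m ^ 2 + (c / D) ^ 2 := by
        calc ‖p‖ ^ 2 = ‖z + (c / D ^ 2) • (q - p)‖ ^ 2 := by rw [← hpz]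
          _ = m ^ 2 + (c / D) ^ 2 := by
              rw [norm_add_sq_real, h0, hnrm, ← hmdef]; ring
      have hm36 : ‖p‖ ^ 2 ≤ 36 * m ^ 2 := by nlinarith [norm_nonneg p]
      have h35 : (c / D) ^ 2 ≤ 35 * m ^ 2 := by linarith
      have hσsq : (a - b) ^ 2 * (c / D) ^ 2 ≤ (a - b) ^ 2 * (35 * m ^ 2) :=
        mul_le_mul_of_nonneg_left h35 (sq_nonneg _)
      have hid : (b - (a - b) * c / D ^ 2) ^ 2 * D ^ 2 = (b * D - (a - b) * (c / D)) ^ 2 := by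
        field_simp
      have hwn2 : W ^ 2 = (b * D - (a - b) * (c / D)) ^ 2 + (a - b) ^ 2 * m ^ 2 := by
        rw [hwn, hid]
      nlinarith [sq_nonneg (35 * (b * D) - 36 * ((a - b) * (c / D)))]
  have hW0 : 0 ≤ W := by rw [hWdef]; exact norm_nonneg _
  have h16 : D / 6 ≤ b * D := by
    nlinarith [mul_nonneg (show (0:ℝ) ≤ b - 1 / 6 by linarith) hD.le]
  have h2 : (D / 6) ^ 2 ≤ (b * D) ^ 2 := pow_le_pow_left₀ (by positivity) h16 2
  have hD2 : D ^ 2 ≤ 1296 * W ^ 2 := by nlinarith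
  nlinarith [sq_nonneg (D - 36 * W), mul_pos hD hD]

/-- Radial projection estimate: if `E ⊆ ℝⁿ` is a compact convex body with
`closedBall 0 ρ ⊆ E ⊆ ball 0 (6ρ)`, then the radial projection from `E \ B(0,ρ)` to `∂E`
(sending `x` to the point of `∂E` on the ray from the origin through `x`) is Lipschitz with
constant at most `36`. -/
theorem stmt5 (n : ℕ) (ρ : ℝ) (hρ : 0 < ρ) (E : Set (EuclideanSpace ℝ (Fin n)))
    (hconv : Convex ℝ E) (hcomp : IsCompact E)
    (hin : Metric.closedBall (0 : EuclideanSpace ℝ (Fin n)) ρ ⊆ E)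
    (hout : E ⊆ Metric.ball (0 : EuclideanSpace ℝ (Fin n)) (6 * ρ))
    (π : EuclideanSpace ℝ (Fin n) → EuclideanSpace ℝ (Fin n))
    (hπ : ∀ x ∈ E \ Metric.ball (0 : EuclideanSpace ℝ (Fin n)) ρ,
      π x ∈ frontier E ∧ ∃ t : ℝ, 1 ≤ t ∧ π x = t • x) :
    LipschitzOnWith 36 π (E \ Metric.ball (0 : EuclideanSpace ℝ (Fin n)) ρ) := by
  rw [lipschitzOnWith_iff_dist_le_mul]
  intro x hx y hy
  obtain ⟨hfx, t, ht1, hxt⟩ := hπ x hx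
  obtain ⟨hfy, u, hu1, hyu⟩ := hπ y hy
  have hx0 : ρ ≤ ‖x‖ := not_lt.1 (fun h => hx.2 (mem_ball_zero_iff.2 h))
  have hy0 : ρ ≤ ‖y‖ := not_lt.1 (fun h => hy.2 (mem_ball_zero_iff.2 h))
  have ht0 : 0 < t := lt_of_lt_of_le one_pos ht1
  have hu0 : 0 < u := lt_of_lt_of_le one_pos hu1
  have hxe : t⁻¹ • π x = x := by
    rw [hxt, smul_smul, inv_mul_cancel₀ (ne_of_gt ht0), one_smul]
  have hye : u⁻¹ • π y = y := by
    rw [hyu, smul_smul, inv_mul_cancel₀ (ne_of_gt hu0), one_smul]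
  have hcast : ((36 : NNReal) : ℝ) = 36 := by norm_num
  rw [hcast, dist_eq_norm, dist_eq_norm]
  rcases le_total u⁻¹ t⁻¹ with h | h
  · have := radial_key hconv hρ hin hout hfx hfy (inv_pos.2 hu0) h
      (by rw [hye]; exact hy0)
    rw [hxe, hye] at this
    exact this
  · have := radial_key hconv hρ hin hout hfy hfx (inv_pos.2 ht0) h
      (by rw [hxe]; exact hx0)
    rw [hxe, hye] at this
    rw [norm_sub_rev (π x), norm_sub_rev x]
    exact this
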